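/- Let A = [[a,b],[c,d]] ∈ ℝ^{2×2} satisfy det A = ad − bc = 0 and a, d > max{0, b, c}, and set ρ₁ = (d−c)/(a−b), ρ₂ = (d−b)/(a−c) and a_max = max of the absolute values of the entries of A. Let {(y₁ᵗ, y₂ᵗ)} be the dual payoff vectors of any run of Optimistic Fictitious Play on A (any initialization x₁⁰, x₂⁰ ∈ Δ₂ and any tiebreaking rule). Then for every T, Ψ(y₁^{T+1}, y₂^{T+1}) ≤ 8·a_max·(1 + ρ₁ + ρ₂)². -/

import Mathlib

open Matrix

set_option maxHeartbeats 1000000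

/-- A coordinate vector `x` is a standard basis vector maximizing `⟨·, v⟩`
over all standard basis vectors. -/
def IsVertexArgmax {m : ℕ} (x v : Fin m → ℝ) : Prop :=
  ∃ i : Fin m, x = Pi.single i 1 ∧
    ∀ j : Fin m, (Pi.single j 1 : Fin m → ℝ) ⬝ᵥ v ≤ x ⬝ᵥ v

/-- Optimistic Fictitious Play. -/
def IsOFPRun {m n : ℕ} (A : Matrix (Fin m) (Fin n) ℝ)
    (x₁ : ℕ → Fin m → ℝ) (x₂ : ℕ → Fin n → ℝ)
    (y₁ : ℕ → Fin m → ℝ) (y₂ : ℕ → Fin n → ℝ) : Prop :=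
  y₁ 0 = 0 ∧ y₂ 0 = 0 ∧
  x₁ 0 ∈ stdSimplex ℝ (Fin m) ∧ x₂ 0 ∈ stdSimplex ℝ (Fin n) ∧
  (∀ t : ℕ, y₁ (t + 1) = y₁ t + A.mulVec (x₂ t)) ∧
  (∀ t : ℕ, y₂ (t + 1) = y₂ t - Aᵀ.mulVec (x₁ t)) ∧
  (∀ t : ℕ, IsVertexArgmax (x₁ (t + 1)) (y₁ (t + 1) + A.mulVec (x₂ t))) ∧
  (∀ t : ℕ, IsVertexArgmax (x₂ (t + 1)) (y₂ (t + 1) - Aᵀ.mulVec (x₁ t)))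

/-- The energy function `Ψ(y₁, y₂) = max_{(x₁,x₂) ∈ Δ_m × Δ_n} (⟨x₁,y₁⟩ + ⟨x₂,y₂⟩)`. -/
noncomputable def energy {m n : ℕ} (y₁ : Fin m → ℝ) (y₂ : Fin n → ℝ) : ℝ :=
  ⨆ p : ↥(stdSimplex ℝ (Fin m)) × ↥(stdSimplex ℝ (Fin n)),
    (p.1 : Fin m → ℝ) ⬝ᵥ y₁ + (p.2 : Fin n → ℝ) ⬝ᵥ y₂

lemma dot2 (x y : Fin 2 → ℝ) : x ⬝ᵥ y = x 0 * y 0 + x 1 * y 1 := by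
  simp [dotProduct, Fin.sum_univ_two]

lemma mulVec2_0 (a b c d : ℝ) (x : Fin 2 → ℝ) :
    (!![a, b; c, d]).mulVec x 0 = a * x 0 + b * x 1 := by
  simp [Matrix.mulVec, dotProduct, Fin.sum_univ_two]

lemma mulVec2_1 (a b c d : ℝ) (x : Fin 2 → ℝ) :
    (!![a, b; c, d]).mulVec x 1 = c * x 0 + d * x 1 := by
  simp [Matrix.mulVec, dotProduct, Fin.sum_univ_two]

lemma mulVecT2_0 (a b c d : ℝ) (x : Fin 2 → ℝ) :
    (!![a, b; c, d])ᵀ.mulVec x 0 = a * x 0 + c * x 1 := by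
  simp [Matrix.mulVec, dotProduct, Fin.sum_univ_two]

lemma mulVecT2_1 (a b c d : ℝ) (x : Fin 2 → ℝ) :
    (!![a, b; c, d])ᵀ.mulVec x 1 = b * x 0 + d * x 1 := by
  simp [Matrix.mulVec, dotProduct, Fin.sum_univ_two]

lemma simplex2 {x : Fin 2 → ℝ} (h : x ∈ stdSimplex ℝ (Fin 2)) :
    0 ≤ x 0 ∧ 0 ≤ x 1 ∧ x 0 + x 1 = 1 := by
  obtain ⟨h1, h2⟩ := h
  exact ⟨h1 0, h1 1, by rw [← Fin.sum_univ_two x]; exact h2⟩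

lemma vertex_cases {x v : Fin 2 → ℝ} (h : IsVertexArgmax x v) :
    (x 0 = 1 ∧ x 1 = 0 ∧ v 1 ≤ v 0) ∨ (x 0 = 0 ∧ x 1 = 1 ∧ v 0 ≤ v 1) := by
  obtain ⟨i, rfl, hmax⟩ := h
  have key : ∀ j : Fin 2, (Pi.single j 1 : Fin 2 → ℝ) ⬝ᵥ v = v j := by
    intro j
    fin_cases j <;> simp [dot2, Pi.single_apply]
  obtain rfl | rfl : i = 0 ∨ i = 1 := by omega
  · left
    refine ⟨by simp, by simp, ?_⟩
    have := hmax 1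
    rwa [key 1, key 0] at this
  · right
    refine ⟨by simp, by simp, ?_⟩
    have := hmax 0
    rwa [key 0, key 1] at this

lemma vertex_simplex {x v : Fin 2 → ℝ} (h : IsVertexArgmax x v) :
    x ∈ stdSimplex ℝ (Fin 2) := by
  obtain ⟨i, rfl, _⟩ := h
  constructor
  · intro j
    rcases eq_or_ne j i with rfl | hne
    · simp
    · simp [Pi.single_eq_of_ne hne]
  · rw [Fin.sum_univ_two]
    obtain rfl | rfl : i = 0 ∨ i = 1 := by omega
    · simp
    · simp

lemma half_mem : (fun _ => (1:ℝ)/2) ∈ stdSimplex ℝ (Fin 2) := by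
  constructor
  · intro i; norm_num
  · rw [Fin.sum_univ_two]; norm_num

noncomputable instance : Nonempty (↥(stdSimplex ℝ (Fin 2)) × ↥(stdSimplex ℝ (Fin 2))) :=
  ⟨⟨⟨_, half_mem⟩, ⟨_, half_mem⟩⟩⟩

lemma energy_le_max (z₁ z₂ : Fin 2 → ℝ) :
    energy z₁ z₂ ≤ max (z₁ 0) (z₁ 1) + max (z₂ 0) (z₂ 1) := by
  apply ciSup_le
  rintro ⟨⟨p, hp⟩, ⟨q, hq⟩⟩
  obtain ⟨hp0, hp1, hps⟩ := simplex2 hp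
  obtain ⟨hq0, hq1, hqs⟩ := simplex2 hq
  simp only [dot2]
  have m1 : (p 0 + p 1) * max (z₁ 0) (z₁ 1) = max (z₁ 0) (z₁ 1) := by rw [hps, one_mul]
  have m2 : (q 0 + q 1) * max (z₂ 0) (z₂ 1) = max (z₂ 0) (z₂ 1) := by rw [hqs, one_mul]
  have e1 : p 0 * z₁ 0 + p 1 * z₁ 1 ≤ max (z₁ 0) (z₁ 1) := by
    nlinarith [mul_le_mul_of_nonneg_left (le_max_left (z₁ 0) (z₁ 1)) hp0,
      mul_le_mul_of_nonneg_left (le_max_right (z₁ 0) (z₁ 1)) hp1]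
  have e2 : q 0 * z₂ 0 + q 1 * z₂ 1 ≤ max (z₂ 0) (z₂ 1) := by
    nlinarith [mul_le_mul_of_nonneg_left (le_max_left (z₂ 0) (z₂ 1)) hq0,
      mul_le_mul_of_nonneg_left (le_max_right (z₂ 0) (z₂ 1)) hq1]
  exact add_le_add e1 e2

lemma max_add_max_le {A₁ A₂ A₃ A₄ B : ℝ} (h13 : A₁ + A₃ ≤ B) (h14 : A₁ + A₄ ≤ B)
    (h23 : A₂ + A₃ ≤ B) (h24 : A₂ + A₄ ≤ B) : max A₁ A₂ + max A₃ A₄ ≤ B := by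
  rcases le_total A₁ A₂ with h | h <;> rcases le_total A₃ A₄ with h' | h'
  · rw [max_eq_right h, max_eq_right h']; linarith
  · rw [max_eq_right h, max_eq_left h']; linarith
  · rw [max_eq_left h, max_eq_right h']; linarith
  · rw [max_eq_left h, max_eq_left h']; linarith

/-- bounded energy of the dual iterates of Optimistic FP on a
2×2 matrix `A = [[a,b],[c,d]]` with `det A = 0` and `a, d > max{0, b, c}`. -/
theorem ofp_energy_bound_2x2
    (a b c d : ℝ)
    (hdet : a * d - b * c = 0)
    (ha : a > max 0 (max b c)) (hd : d > max 0 (max b c))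
    (ρ₁ ρ₂ amax : ℝ)
    (hρ₁ : ρ₁ = (d - c) / (a - b)) (hρ₂ : ρ₂ = (d - b) / (a - c))
    (hamax : amax = max (max |a| |b|) (max |c| |d|))
    (x₁ x₂ y₁ y₂ : ℕ → Fin 2 → ℝ)
    (hrun : IsOFPRun !![a, b; c, d] x₁ x₂ y₁ y₂) :
    ∀ T : ℕ, energy (y₁ (T + 1)) (y₂ (T + 1)) ≤ 8 * amax * (1 + ρ₁ + ρ₂) ^ 2 := by
  obtain ⟨hy10, hy20, hx10, hx20, hU1, hU2, hA1, hA2⟩ := hrun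
  simp only [gt_iff_lt, max_lt_iff] at ha hd
  obtain ⟨ha0, hba, hca⟩ := ha
  obtain ⟨hd0, hbd, hcd⟩ := hd
  have hb0 : b < 0 := by nlinarith
  have hc0 : c < 0 := by nlinarith
  have hab : (0:ℝ) < a - b := by linarith
  have hac : (0:ℝ) < a - c := by linarith
  have h1' : ρ₁ * (a - b) = d - c := by rw [hρ₁]; field_simp
  have h2' : ρ₂ * (a - c) = d - b := by rw [hρ₂]; field_simp
  have hc' : c = -(ρ₁ * a) := by
    have h3 : (c + ρ₁ * a) * (a - b) = 0 := by linear_combination a * h1' + hdet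
    rcases mul_eq_zero.mp h3 with h | h
    · linarith
    · linarith
  have hb' : b = -(ρ₂ * a) := by
    have h3 : (b + ρ₂ * a) * (a - c) = 0 := by linear_combination a * h2' + hdet
    rcases mul_eq_zero.mp h3 with h | h
    · linarith
    · linarith
  have hρ₁0 : 0 < ρ₁ := by nlinarith
  have hρ₂0 : 0 < ρ₂ := by nlinarith
  subst hb' hc'
  have hd' : d = ρ₁ * ρ₂ * a := by
    have h3 : a * (d - ρ₁ * ρ₂ * a) = 0 := by linear_combination hdet
    rcases mul_eq_zero.mp h3 with h | h
    · linarith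
    · linarith
  subst hd'
  have hpa : 0 < ρ₁ * a := mul_pos hρ₁0 ha0
  have hqa : 0 < ρ₂ * a := mul_pos hρ₂0 ha0
  have hpqa : 0 < ρ₁ * ρ₂ * a := by positivity
  -- step equations
  have hstep1 : ∀ t, y₁ (t+1) 0 = y₁ t 0 + (a * x₂ t 0 + -(ρ₂*a) * x₂ t 1) ∧
      y₁ (t+1) 1 = y₁ t 1 + (-(ρ₁*a) * x₂ t 0 + ρ₁*ρ₂*a * x₂ t 1) := by
    intro t
    rw [hU1 t]
    constructor
    · show y₁ t 0 + _ = _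
      rw [mulVec2_0]
    · show y₁ t 1 + _ = _
      rw [mulVec2_1]
  have hstep2 : ∀ t, y₂ (t+1) 0 = y₂ t 0 - (a * x₁ t 0 + -(ρ₁*a) * x₁ t 1) ∧
      y₂ (t+1) 1 = y₂ t 1 - (-(ρ₂*a) * x₁ t 0 + ρ₁*ρ₂*a * x₁ t 1) := by
    intro t
    rw [hU2 t]
    constructor
    · show y₂ t 0 - _ = _
      rw [mulVecT2_0]
    · show y₂ t 1 - _ = _
      rw [mulVecT2_1]
  -- collinearity of the dual iterates
  have hlin : ∀ t, y₁ t 1 = -ρ₁ * y₁ t 0 ∧ y₂ t 1 = -ρ₂ * y₂ t 0 := by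
    intro t
    induction t with
    | zero =>
      rw [hy10, hy20]
      norm_num
    | succ t ih =>
      obtain ⟨e1, e2⟩ := hstep1 t
      obtain ⟨e3, e4⟩ := hstep2 t
      constructor
      · rw [e2, e1, ih.1]; ring
      · rw [e4, e3, ih.2]; ring
  -- simplex membership of all iterates
  have hsx₁ : ∀ t, x₁ t ∈ stdSimplex ℝ (Fin 2) := by
    intro t
    cases t with
    | zero => exact hx10
    | succ t => exact vertex_simplex (hA1 t)
  have hsx₂ : ∀ t, x₂ t ∈ stdSimplex ℝ (Fin 2) := by
    intro t
    cases t with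
    | zero => exact hx20
    | succ t => exact vertex_simplex (hA2 t)
  -- increments bounds
  have hu_ub : ∀ t, y₁ (t+1) 0 ≤ y₁ t 0 + a := by
    intro t
    obtain ⟨h0, h1, hs⟩ := simplex2 (hsx₂ t)
    have e : a * x₂ t 0 + a * x₂ t 1 = a := by linear_combination a * hs
    rw [(hstep1 t).1]
    linarith [e, mul_nonneg ha0.le h1, mul_nonneg hqa.le h1]
  have hu_lb : ∀ t, y₁ t 0 - ρ₂*a ≤ y₁ (t+1) 0 := by
    intro t
    obtain ⟨h0, h1, hs⟩ := simplex2 (hsx₂ t)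
    have e : ρ₂*a * x₂ t 0 + ρ₂*a * x₂ t 1 = ρ₂*a := by linear_combination (ρ₂*a) * hs
    rw [(hstep1 t).1]
    linarith [e, mul_nonneg ha0.le h0, mul_nonneg hqa.le h0]
  have hw_lb : ∀ t, y₂ t 0 - a ≤ y₂ (t+1) 0 := by
    intro t
    obtain ⟨h0, h1, hs⟩ := simplex2 (hsx₁ t)
    have e : a * x₁ t 0 + a * x₁ t 1 = a := by linear_combination a * hs
    rw [(hstep2 t).1]
    linarith [e, mul_nonneg ha0.le h1, mul_nonneg hpa.le h1]
  have hw_ub : ∀ t, y₂ (t+1) 0 ≤ y₂ t 0 + ρ₁*a := by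
    intro t
    obtain ⟨h0, h1, hs⟩ := simplex2 (hsx₁ t)
    have e : ρ₁*a * x₁ t 0 + ρ₁*a * x₁ t 1 = ρ₁*a := by linear_combination (ρ₁*a) * hs
    rw [(hstep2 t).1]
    linarith [e, mul_nonneg ha0.le h0, mul_nonneg hpa.le h0]
  -- choice conditions
  have hcx₁ : ∀ t, (x₁ (t+1) 0 = 1 ∧ x₁ (t+1) 1 = 0 ∧
        -(a * x₂ t 0) + ρ₂*a * x₂ t 1 ≤ y₁ (t+1) 0) ∨
      (x₁ (t+1) 0 = 0 ∧ x₁ (t+1) 1 = 1 ∧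
        y₁ (t+1) 0 ≤ -(a * x₂ t 0) + ρ₂*a * x₂ t 1) := by
    intro t
    have hv0 : (y₁ (t+1) + (!![a, -(ρ₂*a); -(ρ₁*a), ρ₁*ρ₂*a]).mulVec (x₂ t)) 0
        = y₁ (t+1) 0 + (a * x₂ t 0 + -(ρ₂*a) * x₂ t 1) := by
      show y₁ (t+1) 0 + _ = _
      rw [mulVec2_0]
    have hv1 : (y₁ (t+1) + (!![a, -(ρ₂*a); -(ρ₁*a), ρ₁*ρ₂*a]).mulVec (x₂ t)) 1
        = -ρ₁ * y₁ (t+1) 0 + (-(ρ₁*a) * x₂ t 0 + ρ₁*ρ₂*a * x₂ t 1) := by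
      show y₁ (t+1) 1 + _ = _
      rw [mulVec2_1, (hlin (t+1)).1]
    rcases vertex_cases (hA1 t) with ⟨hx0, hx1, hvv⟩ | ⟨hx0, hx1, hvv⟩
    · left
      refine ⟨hx0, hx1, ?_⟩
      rw [hv0, hv1] at hvv
      have key : (1+ρ₁) * (-(a * x₂ t 0) + ρ₂*a * x₂ t 1) ≤ (1+ρ₁) * (y₁ (t+1) 0) := by
        ring_nf at hvv ⊢
        linarith
      exact le_of_mul_le_mul_left key (by linarith)
    · right
      refine ⟨hx0, hx1, ?_⟩
      rw [hv0, hv1] at hvv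
      have key : (1+ρ₁) * (y₁ (t+1) 0) ≤ (1+ρ₁) * (-(a * x₂ t 0) + ρ₂*a * x₂ t 1) := by
        ring_nf at hvv ⊢
        linarith
      exact le_of_mul_le_mul_left key (by linarith)
  have hcx₂ : ∀ t, (x₂ (t+1) 0 = 1 ∧ x₂ (t+1) 1 = 0 ∧
        a * x₁ t 0 - ρ₁*a * x₁ t 1 ≤ y₂ (t+1) 0) ∨
      (x₂ (t+1) 0 = 0 ∧ x₂ (t+1) 1 = 1 ∧
        y₂ (t+1) 0 ≤ a * x₁ t 0 - ρ₁*a * x₁ t 1) := by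
    intro t
    have hv0 : (y₂ (t+1) - (!![a, -(ρ₂*a); -(ρ₁*a), ρ₁*ρ₂*a])ᵀ.mulVec (x₁ t)) 0
        = y₂ (t+1) 0 - (a * x₁ t 0 + -(ρ₁*a) * x₁ t 1) := by
      show y₂ (t+1) 0 - _ = _
      rw [mulVecT2_0]
    have hv1 : (y₂ (t+1) - (!![a, -(ρ₂*a); -(ρ₁*a), ρ₁*ρ₂*a])ᵀ.mulVec (x₁ t)) 1
        = -ρ₂ * y₂ (t+1) 0 - (-(ρ₂*a) * x₁ t 0 + ρ₁*ρ₂*a * x₁ t 1) := by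
      show y₂ (t+1) 1 - _ = _
      rw [mulVecT2_1, (hlin (t+1)).2]
    rcases vertex_cases (hA2 t) with ⟨hx0, hx1, hvv⟩ | ⟨hx0, hx1, hvv⟩
    · left
      refine ⟨hx0, hx1, ?_⟩
      rw [hv0, hv1] at hvv
      have key : (1+ρ₂) * (a * x₁ t 0 - ρ₁*a * x₁ t 1) ≤ (1+ρ₂) * (y₂ (t+1) 0) := by
        ring_nf at hvv ⊢
        linarith
      exact le_of_mul_le_mul_left key (by linarith)
    · right
      refine ⟨hx0, hx1, ?_⟩
      rw [hv0, hv1] at hvv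
      have key : (1+ρ₂) * (y₂ (t+1) 0) ≤ (1+ρ₂) * (a * x₁ t 0 - ρ₁*a * x₁ t 1) := by
        ring_nf at hvv ⊢
        linarith
      exact le_of_mul_le_mul_left key (by linarith)
  -- weak bounds on the condition expressions
  have hLw : ∀ t, -a ≤ -(a * x₂ t 0) + ρ₂*a * x₂ t 1 ∧ -(a * x₂ t 0) + ρ₂*a * x₂ t 1 ≤ ρ₂*a := by
    intro t
    obtain ⟨h0, h1, hs⟩ := simplex2 (hsx₂ t)
    have e : a * x₂ t 0 + a * x₂ t 1 = a := by linear_combination a * hs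
    have e2 : ρ₂*a * x₂ t 0 + ρ₂*a * x₂ t 1 = ρ₂*a := by linear_combination (ρ₂*a) * hs
    constructor
    · linarith [e, mul_nonneg ha0.le h1, mul_nonneg hqa.le h1]
    · linarith [e2, mul_nonneg ha0.le h0, mul_nonneg hqa.le h0]
  have hRw : ∀ t, -(ρ₁*a) ≤ a * x₁ t 0 - ρ₁*a * x₁ t 1 ∧ a * x₁ t 0 - ρ₁*a * x₁ t 1 ≤ a := by
    intro t
    obtain ⟨h0, h1, hs⟩ := simplex2 (hsx₁ t)
    have e : a * x₁ t 0 + a * x₁ t 1 = a := by linear_combination a * hs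
    have e2 : ρ₁*a * x₁ t 0 + ρ₁*a * x₁ t 1 = ρ₁*a := by linear_combination (ρ₁*a) * hs
    constructor
    · linarith [e2, mul_nonneg ha0.le h0, mul_nonneg hpa.le h0]
    · linarith [e, mul_nonneg ha0.le h1, mul_nonneg hpa.le h1]
  -- main invariant
  have key : ∀ T : ℕ, max (y₁ (T+1) 0) (-ρ₁ * y₁ (T+1) 0) +
      max (y₂ (T+1) 0) (-ρ₂ * y₂ (T+1) 0) ≤ 2*a*(1+ρ₁)*(1+ρ₂) := by
    intro T
    induction T with
    | zero =>
      have hz1 : y₁ 0 0 = 0 := by rw [hy10]; rfl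
      have hz2 : y₂ 0 0 = 0 := by rw [hy20]; rfl
      have a1 := hu_ub 0
      have a2 := hu_lb 0
      have a3 := hw_lb 0
      have a4 := hw_ub 0
      rw [hz1] at a1 a2
      rw [hz2] at a3 a4
      have P1 : 0 ≤ ρ₂ * (y₂ 1 0 + a) := mul_nonneg hρ₂0.le (by linarith)
      have P2 : 0 ≤ ρ₁ * (y₁ 1 0 + ρ₂*a) := mul_nonneg hρ₁0.le (by linarith)
      apply max_add_max_le <;>
        linarith [hpa, hqa, hpqa, ha0, a1, a2, a3, a4, P1, P2]
    | succ T ih =>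
      cases T with
      | zero =>
        have hz1 : y₁ 0 0 = 0 := by rw [hy10]; rfl
        have hz2 : y₂ 0 0 = 0 := by rw [hy20]; rfl
        have a1 := hu_ub 0
        have a2 := hu_lb 0
        have a3 := hw_lb 0
        have a4 := hw_ub 0
        have b1 := hu_ub 1
        have b2 := hu_lb 1
        have b3 := hw_lb 1
        have b4 := hw_ub 1
        rw [hz1] at a1 a2
        rw [hz2] at a3 a4
        have P1 : 0 ≤ ρ₂ * (y₂ (0+1+1) 0 + (a+a)) := mul_nonneg hρ₂0.le (by linarith)
        have P2 : 0 ≤ ρ₁ * (y₁ (0+1+1) 0 + (ρ₂*a+ρ₂*a)) := mul_nonneg hρ₁0.le (by linarith)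
        apply max_add_max_le <;>
          linarith [hpa, hqa, hpqa, ha0, a1, a2, a3, a4, b1, b2, b3, b4, P1, P2]
      | succ S =>
        have h1 : y₁ (S+1+1) 0 + y₂ (S+1+1) 0 ≤ 2*a*(1+ρ₁)*(1+ρ₂) :=
          le_trans (add_le_add (le_max_left _ _) (le_max_left _ _)) ih
        have h2 : y₁ (S+1+1) 0 + -ρ₂ * y₂ (S+1+1) 0 ≤ 2*a*(1+ρ₁)*(1+ρ₂) :=
          le_trans (add_le_add (le_max_left _ _) (le_max_right _ _)) ih
        have h3 : -ρ₁ * y₁ (S+1+1) 0 + y₂ (S+1+1) 0 ≤ 2*a*(1+ρ₁)*(1+ρ₂) :=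
          le_trans (add_le_add (le_max_right _ _) (le_max_left _ _)) ih
        have h4 : -ρ₁ * y₁ (S+1+1) 0 + -ρ₂ * y₂ (S+1+1) 0 ≤ 2*a*(1+ρ₁)*(1+ρ₂) :=
          le_trans (add_le_add (le_max_right _ _) (le_max_right _ _)) ih
        rcases hcx₂ (S+1) with ⟨hs0, hs1, hcs⟩ | ⟨hs0, hs1, hcs⟩ <;>
          rcases hcx₁ (S+1) with ⟨hr0, hr1, hcr⟩ | ⟨hr0, hr1, hcr⟩
        · -- Case A : x₂ = e₀ (u += a), x₁ = e₀ (w -= a)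
          have hu' : y₁ (S+1+1+1) 0 = y₁ (S+1+1) 0 + a := by
            rw [(hstep1 (S+1+1)).1, hs0, hs1]; ring
          have hw' : y₂ (S+1+1+1) 0 = y₂ (S+1+1) 0 - a := by
            rw [(hstep2 (S+1+1)).1, hr0, hr1]; ring
          rw [hu', hw']
          have hu_lb' : -a ≤ y₁ (S+1+1) 0 := le_trans (hLw (S+1)).1 hcr
          rcases hcx₁ S with ⟨hp0, hp1, hcp⟩ | ⟨hp0, hp1, hcp⟩
          · -- previous x₁ = e₀ : strong, w ≥ a
            have hw_ge : a ≤ y₂ (S+1+1) 0 := by rw [hp0, hp1] at hcs; linarith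
            have P1 : 0 ≤ ρ₂ * (y₂ (S+1+1) 0 - a) := mul_nonneg hρ₂0.le (by linarith)
            have P2 : 0 ≤ ρ₁ * (y₁ (S+1+1) 0 + a) := mul_nonneg hρ₁0.le (by linarith)
            apply max_add_max_le <;>
              linarith [h1, h2, h3, h4, ha0, hpa, hqa, hpqa, hw_ge, hu_lb', P1, P2]
          · -- previous x₁ = e₁ : w ≥ -ρ₁ a and u bounded
            have hw_ge : -(ρ₁*a) ≤ y₂ (S+1+1) 0 := by rw [hp0, hp1] at hcs; linarith
            have hu_ub' : y₁ (S+1+1) 0 ≤ ρ₂*a + a := by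
              have e1 := le_trans hcp (hLw S).2
              have e2 := hu_ub (S+1)
              linarith
            have P1 : 0 ≤ ρ₂ * (y₂ (S+1+1) 0 + ρ₁*a) := mul_nonneg hρ₂0.le (by linarith)
            have P2 : 0 ≤ ρ₁ * (y₁ (S+1+1) 0 + a) := mul_nonneg hρ₁0.le (by linarith)
            apply max_add_max_le <;>
              linarith [h1, h2, h3, h4, ha0, hpa, hqa, hpqa, hu_lb', hu_ub', hw_ge, P1, P2]
        · -- Case D : x₂ = e₀ (u += a), x₁ = e₁ (w += ρ₁ a)
          have hu' : y₁ (S+1+1+1) 0 = y₁ (S+1+1) 0 + a := by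
            rw [(hstep1 (S+1+1)).1, hs0, hs1]; ring
          have hw' : y₂ (S+1+1+1) 0 = y₂ (S+1+1) 0 + ρ₁*a := by
            rw [(hstep2 (S+1+1)).1, hr0, hr1]; ring
          rw [hu', hw']
          have hu_ub' : y₁ (S+1+1) 0 ≤ ρ₂*a := le_trans hcr (hLw (S+1)).2
          have hw_lb' : -(ρ₁*a) ≤ y₂ (S+1+1) 0 := le_trans (hRw (S+1)).1 hcs
          by_cases hu : y₁ (S+1+1) 0 ≤ -a
          · have P1 : 0 ≤ ρ₁ * (-a - y₁ (S+1+1) 0) := mul_nonneg hρ₁0.le (by linarith)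
            have P2 : 0 ≤ ρ₂ * (y₂ (S+1+1) 0 + ρ₁*a) := mul_nonneg hρ₂0.le (by linarith)
            apply max_add_max_le <;>
              linarith [h1, h2, h3, h4, ha0, hpa, hqa, hpqa, hu, hw_lb', P1, P2]
          · push_neg at hu
            rcases hcx₂ S with ⟨hq0', hq1', hcq⟩ | ⟨hq0', hq1', hcq⟩
            · exfalso
              rw [hq0', hq1'] at hcr
              have := le_trans hcr (by linarith : -(a * (1:ℝ)) + ρ₂*a * 0 ≤ -a)
              linarith
            · have hw_ub' : y₂ (S+1+1) 0 ≤ a + ρ₁*a := by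
                have e1 := le_trans hcq (hRw S).2
                have e2 := hw_ub (S+1)
                linarith
              have P1 : 0 ≤ ρ₁ * (y₁ (S+1+1) 0 + a) := mul_nonneg hρ₁0.le (by linarith)
              have P2 : 0 ≤ ρ₂ * (y₂ (S+1+1) 0 + ρ₁*a) := mul_nonneg hρ₂0.le (by linarith)
              apply max_add_max_le <;>
                linarith [ha0, hpa, hqa, hpqa, hu, hu_ub', hw_lb', hw_ub', P1, P2]
        · -- Case B : x₂ = e₁ (u -= ρ₂ a), x₁ = e₀ (w -= a)
          have hu' : y₁ (S+1+1+1) 0 = y₁ (S+1+1) 0 - ρ₂*a := by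
            rw [(hstep1 (S+1+1)).1, hs0, hs1]; ring
          have hw' : y₂ (S+1+1+1) 0 = y₂ (S+1+1) 0 - a := by
            rw [(hstep2 (S+1+1)).1, hr0, hr1]; ring
          rw [hu', hw']
          have hw_ub' : y₂ (S+1+1) 0 ≤ a := le_trans hcs (hRw (S+1)).2
          have hu_lb' : -a ≤ y₁ (S+1+1) 0 := le_trans (hLw (S+1)).1 hcr
          by_cases hu : ρ₂*a ≤ y₁ (S+1+1) 0
          · have P1 : 0 ≤ ρ₁ * (y₁ (S+1+1) 0 - ρ₂*a) := mul_nonneg hρ₁0.le (by linarith)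
            apply max_add_max_le <;>
              linarith [h1, h2, h3, h4, ha0, hpa, hqa, hpqa, hu, hw_ub', P1]
          · push_neg at hu
            rcases hcx₂ S with ⟨hq0', hq1', hcq⟩ | ⟨hq0', hq1', hcq⟩
            · have hw_lb' : -(ρ₁*a) - a ≤ y₂ (S+1+1) 0 := by
                have e1 := le_trans (hRw S).1 hcq
                have e2 := hw_lb (S+1)
                linarith
              have P1 : 0 ≤ ρ₁ * (y₁ (S+1+1) 0 + a) := mul_nonneg hρ₁0.le (by linarith)
              have P2 : 0 ≤ ρ₂ * (y₂ (S+1+1) 0 + ρ₁*a + a) := mul_nonneg hρ₂0.le (by linarith)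
              apply max_add_max_le <;>
                linarith [ha0, hpa, hqa, hpqa, hu, hu_lb', hw_ub', hw_lb', P1, P2]
            · exfalso
              rw [hq0', hq1'] at hcr
              have : -(a * (0:ℝ)) + ρ₂*a * 1 ≤ y₁ (S+1+1) 0 := hcr
              linarith
        · -- Case C : x₂ = e₁ (u -= ρ₂ a), x₁ = e₁ (w += ρ₁ a)
          have hu' : y₁ (S+1+1+1) 0 = y₁ (S+1+1) 0 - ρ₂*a := by
            rw [(hstep1 (S+1+1)).1, hs0, hs1]; ring
          have hw' : y₂ (S+1+1+1) 0 = y₂ (S+1+1) 0 + ρ₁*a := by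
            rw [(hstep2 (S+1+1)).1, hr0, hr1]; ring
          rw [hu', hw']
          have hu_ub' : y₁ (S+1+1) 0 ≤ ρ₂*a := le_trans hcr (hLw (S+1)).2
          by_cases hw : y₂ (S+1+1) 0 ≤ -(ρ₁*a)
          · have P1 : 0 ≤ ρ₂ * (-(ρ₁*a) - y₂ (S+1+1) 0) := mul_nonneg hρ₂0.le (by linarith)
            have P2 : 0 ≤ ρ₁ * (ρ₂*a - y₁ (S+1+1) 0) := mul_nonneg hρ₁0.le (by linarith)
            apply max_add_max_le <;>
              linarith [h1, h2, h3, h4, ha0, hpa, hqa, hpqa, hu_ub', hw, P1, P2]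
          · push_neg at hw
            rcases hcx₁ S with ⟨hp0, hp1, hcp⟩ | ⟨hp0, hp1, hcp⟩
            · have hw_ub' : y₂ (S+1+1) 0 ≤ a := by rw [hp0, hp1] at hcs; linarith
              have hu_lb' : -a - ρ₂*a ≤ y₁ (S+1+1) 0 := by
                have e1 := le_trans (hLw S).1 hcp
                have e2 := hu_lb (S+1)
                linarith
              have P1 : 0 ≤ ρ₁ * (y₁ (S+1+1) 0 + a + ρ₂*a) := mul_nonneg hρ₁0.le (by linarith)
              have P2 : 0 ≤ ρ₂ * (y₂ (S+1+1) 0 + ρ₁*a) := mul_nonneg hρ₂0.le (by linarith)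
              apply max_add_max_le <;>
                linarith [ha0, hpa, hqa, hpqa, hw, hu_ub', hw_ub', hu_lb', P1, P2]
            · exfalso
              rw [hp0, hp1] at hcs
              have : y₂ (S+1+1) 0 ≤ a * (0:ℝ) - ρ₁*a * 1 := hcs
              linarith
  -- conclusion
  intro T
  have hamax_a : a ≤ amax := by
    rw [hamax]
    calc a = |a| := (abs_of_pos ha0).symm
    _ ≤ max |a| |(-(ρ₂*a))| := le_max_left _ _
    _ ≤ max (max |a| |(-(ρ₂*a))|) (max |(-(ρ₁*a))| |ρ₁*ρ₂*a|) := le_max_left _ _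
  have hfin : 2*a*(1+ρ₁)*(1+ρ₂) ≤ 8 * amax * (1 + ρ₁ + ρ₂) ^ 2 := by
    nlinarith [mul_nonneg (sub_nonneg.2 hamax_a) (sq_nonneg (1+ρ₁+ρ₂)),
      mul_nonneg ha0.le (sq_nonneg ρ₁), mul_nonneg ha0.le (sq_nonneg ρ₂),
      mul_nonneg (mul_nonneg ha0.le hρ₁0.le) hρ₂0.le, hpa, hqa, ha0]
  calc energy (y₁ (T+1)) (y₂ (T+1))
      ≤ max (y₁ (T+1) 0) (y₁ (T+1) 1) + max (y₂ (T+1) 0) (y₂ (T+1) 1) :=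
        energy_le_max _ _
    _ ≤ 8 * amax * (1 + ρ₁ + ρ₂) ^ 2 := by
        rw [(hlin (T+1)).1, (hlin (T+1)).2]
        exact le_trans (key T) hfin
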